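/- Let X be a proper geodesic metric space, κ a concave monotone increasing sublinear function, and h : [0,∞) → X a (q′,Q′)-quasi-geodesic ray that is weakly κ-Morse. For every q, Q there exists K such that for any (q,Q)-quasi-geodesic α : [0,A] → X with endpoints h(t₁) and h(t₂) (t₁ ≤ t₂), and any s ∈ [0,A]: (1) d(α(s), h) ≤ K·κ(d(o, p_s)) where p_s is a closest point projection of α(s) to h; (2) d(α(s), h) ≤ K·κ(t₂); and (3) d(α(s), h([t₁,t₂])) ≤ K·κ(t₂). -/

import Mathlib

open Metric Set Filter

/-- A sublinear function: `κ : [0,∞) → [1,∞)` concave, monotone increasing,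
with `κ(t)/t → 0`. -/
def Sublinear (κ : ℝ → ℝ) : Prop :=
  (∀ t : ℝ, 1 ≤ κ t) ∧ Monotone κ ∧ ConcaveOn ℝ (Set.Ici 0) κ ∧
    Tendsto (fun t => κ t / t) atTop (nhds 0)

/-- A continuous `(q,Q)`-quasi-geodesic ray. -/
def QGRay {X : Type*} [MetricSpace X] (q Q : ℝ) (α : ℝ → X) : Prop :=
  Continuous α ∧ ∀ s t : ℝ, 0 ≤ s → 0 ≤ t →
    (1 / q) * |s - t| - Q ≤ dist (α s) (α t) ∧ dist (α s) (α t) ≤ q * |s - t| + Q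

/-- A continuous `(q,Q)`-quasi-geodesic segment defined on `[a,b]`. -/
def QGSeg {X : Type*} [MetricSpace X] (q Q a b : ℝ) (α : ℝ → X) : Prop :=
  Continuous α ∧ ∀ s t : ℝ, s ∈ Set.Icc a b → t ∈ Set.Icc a b →
    (1 / q) * |s - t| - Q ≤ dist (α s) (α t) ∧ dist (α s) (α t) ≤ q * |s - t| + Q

/-- `X` is a geodesic metric space. -/
def IsGeodesicSpace (X : Type*) [MetricSpace X] : Prop :=
  ∀ x y : X, ∃ γ : ℝ → X, γ 0 = x ∧ γ (dist x y) = y ∧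
    ∀ s t : ℝ, s ∈ Set.Icc 0 (dist x y) → t ∈ Set.Icc 0 (dist x y) →
      dist (γ s) (γ t) = |s - t|

/-- A set `Z` is weakly `κ`-Morse. -/
def WeaklyKappaMorse {X : Type*} [MetricSpace X] (o : X) (κ : ℝ → ℝ) (Z : Set X) : Prop :=
  ∃ m : ℝ → ℝ → ℝ, ∀ q Q a b : ℝ, 0 < q → 0 ≤ Q → a ≤ b →
    ∀ β : ℝ → X, QGSeg q Q a b β → β a ∈ Z → β b ∈ Z →
      ∀ s ∈ Set.Icc a b, Metric.infDist (β s) Z ≤ m q Q * κ (dist o (β s))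

lemma le_infDist' {X : Type*} [MetricSpace X] {s : Set X} (hs : s.Nonempty) {x : X} {b : ℝ}
    (H : ∀ y ∈ s, b ≤ dist x y) : b ≤ Metric.infDist x s := by
  by_contra hlt
  push_neg at hlt
  obtain ⟨y, hy, hd⟩ := (Metric.infDist_lt_iff hs).1 hlt
  exact absurd (H y hy) (not_le.2 hd)

lemma kappa_scale {κ : ℝ → ℝ} (hκ : Sublinear κ) {c t : ℝ} (hc : 1 ≤ c) (ht : 0 ≤ t) :
    κ (c * t) ≤ c * κ t := by
  have h1 := hκ.1 0
  have hc0 : (0:ℝ) < c := by linarith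
  have hmem : c * t ∈ Set.Ici (0:ℝ) := Set.mem_Ici.2 (by positivity)
  have h0mem : (0:ℝ) ∈ Set.Ici (0:ℝ) := Set.mem_Ici.2 le_rfl
  have ha : (0:ℝ) ≤ 1/c := by positivity
  have hb : (0:ℝ) ≤ 1 - 1/c := by
    have : 1/c ≤ 1 := by rw [div_le_one hc0]; exact hc
    linarith
  have hab : 1/c + (1 - 1/c) = 1 := by ring
  have hcc := hκ.2.2.1.2 hmem h0mem ha hb hab
  rw [smul_eq_mul, smul_eq_mul, smul_eq_mul, smul_eq_mul] at hcc
  have harg : 1/c * (c*t) + (1-1/c) * 0 = t := by field_simp; ring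
  rw [harg] at hcc
  have h2 : (1/c) * κ (c*t) ≤ κ t := by nlinarith
  calc κ (c*t) = c * ((1/c) * κ (c*t)) := by field_simp
    _ ≤ c * κ t := mul_le_mul_of_nonneg_left h2 hc0.le

lemma kappa_subadd {κ : ℝ → ℝ} (hκ : Sublinear κ) {a b : ℝ} (ha : 0 ≤ a) (hb : 0 ≤ b) :
    κ (a + b) ≤ κ a + κ b := by
  rcases eq_or_lt_of_le (by linarith : (0:ℝ) ≤ a + b) with h0 | hpos
  · have ha0 : a = 0 := by linarith
    have hb0 : b = 0 := by linarith
    subst ha0; subst hb0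
    simpa using by linarith [hκ.1 (0:ℝ)]
  · have hS : (0:ℝ) < a + b := hpos
    have hmem : a + b ∈ Set.Ici (0:ℝ) := Set.mem_Ici.2 (le_of_lt hS)
    have h0mem : (0:ℝ) ∈ Set.Ici (0:ℝ) := Set.mem_Ici.2 le_rfl
    have ha' : 0 ≤ a/(a+b) := by positivity
    have hb' : 0 ≤ b/(a+b) := by positivity
    have hab1 : a/(a+b) + b/(a+b) = 1 := by field_simp
    have hab2 : b/(a+b) + a/(a+b) = 1 := by linarith
    have hA := hκ.2.2.1.2 hmem h0mem ha' hb' hab1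
    have hB := hκ.2.2.1.2 hmem h0mem hb' ha' hab2
    rw [smul_eq_mul, smul_eq_mul, smul_eq_mul, smul_eq_mul] at hA hB
    have e1 : a/(a+b) * (a+b) + b/(a+b) * 0 = a := by field_simp; ring
    have e2 : b/(a+b) * (a+b) + a/(a+b) * 0 = b := by field_simp; ring
    rw [e1] at hA; rw [e2] at hB
    have hk0 : 0 ≤ κ 0 := le_trans zero_le_one (hκ.1 0)
    have hsum : a/(a+b) * κ (a+b) + b/(a+b) * κ (a+b) = κ (a+b) := by
      rw [← add_mul, hab1, one_mul]
    have hp1 : 0 ≤ b/(a+b) * κ 0 := mul_nonneg hb' hk0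
    have hp2 : 0 ≤ a/(a+b) * κ 0 := mul_nonneg ha' hk0
    linarith

lemma ray_img_closed {X : Type*} [MetricSpace X] {q' Q' : ℝ} (hq' : 0 < q')
    {h : ℝ → X} (hh : QGRay q' Q' h) {c : ℝ} (hc : 0 ≤ c) : IsClosed (h '' Set.Ici c) := by
  apply IsSeqClosed.isClosed
  intro x p hx hlim
  choose v hv hvx using hx
  obtain ⟨N, hN⟩ := Metric.tendsto_atTop.1 hlim 1 one_pos
  have hvB : ∀ n, v (N + n) ∈ Set.Icc c (max c (q' * (1 + dist p (h 0) + Q'))) := by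
    intro n
    refine ⟨hv _, ?_⟩
    have hvn0 : 0 ≤ v (N + n) := le_trans hc (hv _)
    have h1 := (hh.2 (v (N+n)) 0 hvn0 le_rfl).1
    rw [sub_zero, abs_of_nonneg hvn0] at h1
    have h3 := hN (N + n) (Nat.le_add_right _ _)
    have h4 := dist_triangle (x (N+n)) p (h 0)
    have h2 : dist (h (v (N+n))) (h 0) ≤ 1 + dist p (h 0) := by
      rw [hvx]; linarith
    have h6 : (1/q') * v (N+n) ≤ 1 + dist p (h 0) + Q' := by linarith
    have h5 : v (N+n) ≤ q' * (1 + dist p (h 0) + Q') := by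
      have h7 := mul_le_mul_of_nonneg_left h6 hq'.le
      rwa [← mul_assoc, mul_one_div, div_self hq'.ne', one_mul] at h7
    exact le_trans h5 (le_max_right _ _)
  obtain ⟨a, haI, φ, hφ, hlima⟩ := isCompact_Icc.tendsto_subseq hvB
  have hcont : Tendsto (fun n => h (v (N + φ n))) atTop (nhds (h a)) :=
    ((hh.1.tendsto a).comp hlima :)
  have htend : Tendsto (fun n => N + φ n) atTop atTop :=
    tendsto_atTop_mono (fun n => le_trans hφ.le_apply (Nat.le_add_left _ _)) tendsto_id
  have hcont2 : Tendsto (fun n => h (v (N + φ n))) atTop (nhds p) := by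
    have he : (fun n => h (v (N + φ n))) = fun n => x (N + φ n) := funext fun n => hvx _
    rw [he]
    exact hlim.comp htend
  exact ⟨a, haI.1, tendsto_nhds_unique hcont hcont2⟩

set_option maxHeartbeats 1000000 in
theorem refining_weak_morse {X : Type*} [MetricSpace X] [ProperSpace X]
    (hgeo : IsGeodesicSpace X) (κ : ℝ → ℝ) (hκ : Sublinear κ) (o : X)
    (q' Q' : ℝ) (hq' : 0 < q') (hQ' : 0 ≤ Q')
    (h : ℝ → X) (hh : QGRay q' Q' h) (h0 : h 0 = o)
    (hwm : WeaklyKappaMorse o κ (h '' Set.Ici 0)) :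
    ∀ q Q : ℝ, 0 < q → 0 ≤ Q → ∃ K : ℝ, 0 < K ∧
      ∀ A : ℝ, 0 ≤ A → ∀ α : ℝ → X, QGSeg q Q 0 A α →
      ∀ t₁ t₂ : ℝ, 0 ≤ t₁ → t₁ ≤ t₂ → α 0 = h t₁ → α A = h t₂ →
      ∀ s ∈ Set.Icc (0:ℝ) A,
        (∀ ps : X, ps ∈ h '' Set.Ici 0 →
            Metric.infDist (α s) (h '' Set.Ici 0) = dist (α s) ps →
            Metric.infDist (α s) (h '' Set.Ici 0) ≤ K * κ (dist o ps)) ∧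
        Metric.infDist (α s) (h '' Set.Ici 0) ≤ K * κ t₂ ∧
        Metric.infDist (α s) (h '' Set.Icc t₁ t₂) ≤ K * κ t₂ := by
  obtain ⟨m, hm⟩ := hwm
  set Z := h '' Set.Ici 0 with hZdef
  have hZne : Z.Nonempty := ⟨h 0, 0, Set.self_mem_Ici, rfl⟩
  have hZclosed : IsClosed Z := ray_img_closed hq' hh le_rfl
  have hraylow : ∀ a b : ℝ, 0 ≤ a → 0 ≤ b → |a - b| ≤ q' * (dist (h a) (h b) + Q') := by
    intro a b ha hb
    have t1 := (hh.2 a b ha hb).1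
    have t2 : (1/q') * |a - b| ≤ dist (h a) (h b) + Q' := by linarith
    have t3 := mul_le_mul_of_nonneg_left t2 hq'.le
    rwa [← mul_assoc, mul_one_div, div_self hq'.ne', one_mul] at t3
  have hrayup : ∀ a b : ℝ, 0 ≤ a → 0 ≤ b → dist (h a) (h b) ≤ q' * |a - b| + Q' :=
    fun a b ha hb => (hh.2 a b ha hb).2
  intro q Q hq hQ
  -- basic constants
  set m₀ := max (m q Q) 1 with hm₀def
  have hm₀1 : 1 ≤ m₀ := le_max_right _ _
  have hm₀0 : (0:ℝ) ≤ m₀ := by linarith only [hm₀1]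
  have hm₀pos : 0 < m₀ := by linarith only [hm₀1]
  -- sublinearity constant K₁
  have hev : ∀ᶠ t in atTop, κ t / t < 1/(2*m₀) :=
    hκ.2.2.2.eventually_lt_const (one_div_pos.2 (by linarith only [hm₀pos]))
  obtain ⟨R₀, hR₀⟩ := eventually_atTop.1 hev
  set R := max R₀ 1 with hRdef
  have hR1 : (1:ℝ) ≤ R := le_max_right _ _
  have hRbound : ∀ x : ℝ, R ≤ x → m₀ * κ x ≤ x / 2 := by
    intro x hx
    have hx0 : 0 < x := by linarith only [hR1, hx]
    have h1 := hR₀ x (le_trans (le_max_left _ _) hx)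
    rw [div_lt_div_iff₀ hx0 (by linarith only [hm₀pos] : (0:ℝ) < 2*m₀)] at h1
    linarith only [h1]
  set K₁ := max 2 (κ R) with hK₁def
  have hK₁2 : (2:ℝ) ≤ K₁ := le_max_left _ _
  have hK₁0 : (0:ℝ) ≤ K₁ := by linarith only [hK₁2]
  have hcmp : ∀ x y : ℝ, 0 ≤ x → 0 ≤ y → x ≤ y + m₀ * κ x → κ x ≤ K₁ * κ y := by
    intro x y hx hy hxy
    have h1y : 1 ≤ κ y := hκ.1 y
    rcases le_or_gt R x with hRx | hxR
    · have h2 : x ≤ 2 * y := by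
        have := hRbound x hRx
        linarith only [this, hxy]
      have h3 : κ x ≤ κ (2 * y) := hκ.2.1 h2
      have h4 : κ (2*y) ≤ 2 * κ y := kappa_scale hκ (by norm_num) hy
      have h6 : 2 * κ y ≤ K₁ * κ y :=
        mul_le_mul_of_nonneg_right hK₁2 (by linarith only [h1y])
      linarith only [h3, h4, h6]
    · have h3 : κ x ≤ κ R := hκ.2.1 hxR.le
      have h5 : κ R ≤ K₁ := le_max_right _ _
      have h6 : K₁ * 1 ≤ K₁ * κ y := mul_le_mul_of_nonneg_left h1y hK₁0
      linarith only [h3, h5, h6]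
  -- norm-comparison constants
  set c₁ := max (q' + q*q*q') 1 with hc₁def
  have hc₁1 : (1:ℝ) ≤ c₁ := le_max_right _ _
  set c₂ := Q' + q*q*(Q'+Q) + Q with hc₂def
  have hc₂0 : 0 ≤ c₂ := by positivity
  set C₀ := c₁ + κ c₂ with hC₀def
  have hC₀2 : 2 ≤ C₀ := by
    have := hκ.1 c₂
    rw [hC₀def]; linarith only [this, hc₁1]
  set K₂ := m₀ * C₀ with hK₂def
  have hK₂2 : 2 ≤ K₂ := by
    have := mul_le_mul_of_nonneg_right hm₀1 (by linarith only [hC₀2] : (0:ℝ) ≤ C₀)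
    rw [hK₂def]; linarith only [this, hC₀2]
  have hK₂0 : (0:ℝ) ≤ K₂ := by linarith only [hK₂2]
  -- the big constants for part 3
  have hA1 : (0:ℝ) ≤ q'^2 := sq_nonneg q'
  have hA2 : (0:ℝ) ≤ q^2 := sq_nonneg q
  have hA3 : (0:ℝ) ≤ q'^2*Q' + Q' + Q := add_nonneg (add_nonneg (mul_nonneg hA1 hQ') hQ') hQ
  have hA4 : (0:ℝ) ≤ q^2*(q'^2*Q' + Q' + Q) + Q := add_nonneg (mul_nonneg hA2 hA3) hQ
  set c := 1 + 4*q'^2 + 2*q'^2*q^2*(2+3*q'^2) with hcdef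
  set c' := 2*q'^2*(q^2*(q'^2*Q' + Q' + Q) + Q) + 2*q'^2*Q' + Q' with hc'def
  have hP1 : (0:ℝ) ≤ 2*q'^2*q^2*(2+3*q'^2) := by positivity
  have hP2 : (0:ℝ) ≤ 2*q'^2*(q^2*(q'^2*Q' + Q' + Q) + Q) :=
    mul_nonneg (by positivity) hA4
  have hc0 : (0:ℝ) ≤ c := by rw [hcdef]; linarith only [hP1, hA1]
  have hc1 : (1:ℝ) ≤ c := by rw [hcdef]; linarith only [hP1, hA1]
  have hc'0 : (0:ℝ) ≤ c' := by
    rw [hc'def]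
    exact add_nonneg (add_nonneg hP2 (mul_nonneg (by positivity) hQ')) hQ'
  set KK := m₀ * K₁ + K₂ + (c * K₂ + c') + 1 with hKKdef
  have hmK₁0 : (0:ℝ) ≤ m₀ * K₁ := mul_nonneg hm₀0 hK₁0
  have hcK₂0 : (0:ℝ) ≤ c * K₂ := mul_nonneg hc0 hK₂0
  refine ⟨KK, by rw [hKKdef]; linarith only [hmK₁0, hK₂2, hcK₂0, hc'0], ?_⟩
  intro A hA α hα t₁ t₂ ht₁ ht12 hα0 hαA s hs
  have ht₂ : 0 ≤ t₂ := le_trans ht₁ ht12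
  have hκt₂ : 1 ≤ κ t₂ := hκ.1 t₂
  have hκt₂0 : (0:ℝ) ≤ κ t₂ := by linarith only [hκt₂]
  have hαup : ∀ a b : ℝ, a ∈ Set.Icc 0 A → b ∈ Set.Icc 0 A →
      dist (α a) (α b) ≤ q * |a - b| + Q := fun a b ha hb => (hα.2 a b ha hb).2
  have hαlow : ∀ a b : ℝ, a ∈ Set.Icc 0 A → b ∈ Set.Icc 0 A →
      |a - b| ≤ q * (dist (α a) (α b) + Q) := by
    intro a b ha hb
    have t1 := (hα.2 a b ha hb).1
    have t2 : (1/q) * |a - b| ≤ dist (α a) (α b) + Q := by linarith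
    have t3 := mul_le_mul_of_nonneg_left t2 hq.le
    rwa [← mul_assoc, mul_one_div, div_self hq.ne', one_mul] at t3
  have hmem1 : α 0 ∈ Z := by rw [hα0]; exact ⟨t₁, ht₁, rfl⟩
  have hmem2 : α A ∈ Z := by rw [hαA]; exact ⟨t₂, ht₂, rfl⟩
  -- Step W : weak Morse bound
  have hW : ∀ r ∈ Set.Icc (0:ℝ) A, infDist (α r) Z ≤ m₀ * κ (dist o (α r)) := by
    intro r hr
    have h1 := hm q Q 0 A hq hQ hA α hα hmem1 hmem2 r hr
    have h2 : 0 ≤ κ (dist o (α r)) := by linarith only [hκ.1 (dist o (α r))]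
    calc infDist (α r) Z ≤ m q Q * κ (dist o (α r)) := h1
      _ ≤ m₀ * κ (dist o (α r)) := mul_le_mul_of_nonneg_right (le_max_left _ _) h2
  -- bound on A
  have hAbound : A ≤ q * (q'*t₂ + Q' + Q) := by
    have t1 := (hα.2 0 A ⟨le_rfl, hA⟩ ⟨hA, le_rfl⟩).1
    rw [zero_sub, abs_neg, abs_of_nonneg hA] at t1
    have t2 : dist (α 0) (α A) ≤ q' * t₂ + Q' := by
      rw [hα0, hαA]
      have t3 := hrayup t₁ t₂ ht₁ ht₂
      rw [abs_sub_comm, abs_of_nonneg (by linarith only [ht12] : (0:ℝ) ≤ t₂ - t₁)] at t3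
      linarith only [t3, mul_nonneg hq'.le ht₁]
    have t4 : (1/q) * A ≤ q'*t₂ + Q' + Q := by linarith only [t1, t2]
    have t5 := mul_le_mul_of_nonneg_left t4 hq.le
    rwa [← mul_assoc, mul_one_div, div_self hq.ne', one_mul] at t5
  -- norm bound
  have hnorm : ∀ r ∈ Set.Icc (0:ℝ) A, dist o (α r) ≤ c₁ * t₂ + c₂ := by
    intro r hr
    have t1 : dist o (α r) ≤ dist o (α 0) + dist (α 0) (α r) := dist_triangle _ _ _
    have t2 : dist o (α 0) ≤ q' * t₂ + Q' := by
      rw [hα0, ← h0]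
      have t3 := hrayup 0 t₁ le_rfl ht₁
      rw [zero_sub, abs_neg, abs_of_nonneg ht₁] at t3
      have t4 := mul_le_mul_of_nonneg_left ht12 hq'.le
      linarith only [t3, t4]
    have t3 : dist (α 0) (α r) ≤ q * A + Q := by
      have t5 := hαup 0 r ⟨le_rfl, hA⟩ hr
      rw [zero_sub, abs_neg, abs_of_nonneg hr.1] at t5
      have t6 : q * r ≤ q * A := mul_le_mul_of_nonneg_left hr.2 hq.le
      linarith only [t5, t6]
    have t5 : q * A ≤ q * (q*(q'*t₂ + Q' + Q)) := mul_le_mul_of_nonneg_left hAbound hq.le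
    have t6 : (q' + q*q*q') * t₂ ≤ c₁ * t₂ :=
      mul_le_mul_of_nonneg_right (by rw [hc₁def]; exact le_max_left _ _) ht₂
    rw [hc₂def]
    have t7 : q' * t₁ ≤ q' * t₂ := mul_le_mul_of_nonneg_left ht12 hq'.le
    linarith only [t1, t2, t3, t5, t6]
  have hκnorm : ∀ r ∈ Set.Icc (0:ℝ) A, κ (dist o (α r)) ≤ C₀ * κ t₂ := by
    intro r hr
    have h1 : κ (dist o (α r)) ≤ κ (c₁*t₂ + c₂) := hκ.2.1 (hnorm r hr)
    have h2 : κ (c₁*t₂ + c₂) ≤ κ (c₁*t₂) + κ c₂ :=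
      kappa_subadd hκ (mul_nonneg (by linarith only [hc₁1]) ht₂) hc₂0
    have h3 : κ (c₁*t₂) ≤ c₁ * κ t₂ := kappa_scale hκ hc₁1 ht₂
    have h4 : κ c₂ ≤ κ c₂ * κ t₂ := le_mul_of_one_le_right (by linarith only [hκ.1 c₂]) hκt₂
    rw [hC₀def, add_mul]
    linarith only [h1, h2, h3, h4]
  set D := K₂ * κ t₂ with hDdef
  have hD2 : 2 ≤ D := by
    rw [hDdef]
    have := mul_le_mul_of_nonneg_left hκt₂ hK₂0
    linarith only [this, hK₂2]
  have hD0 : (0:ℝ) ≤ D := by linarith only [hD2]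
  have hDball : ∀ r ∈ Set.Icc (0:ℝ) A, infDist (α r) Z ≤ D := by
    intro r hr
    calc infDist (α r) Z ≤ m₀ * κ (dist o (α r)) := hW r hr
      _ ≤ m₀ * (C₀ * κ t₂) := mul_le_mul_of_nonneg_left (hκnorm r hr) hm₀0
      _ = D := by rw [hDdef, hK₂def]; ring
  have hconv : ∀ y : ℝ, y ≤ c * D + c' → y ≤ KK * κ t₂ := by
    intro y hy
    have e0 : c * D + c' = c * K₂ * κ t₂ + c' := by rw [hDdef]; ring
    have e1 : c' ≤ c' * κ t₂ := le_mul_of_one_le_right hc'0 hκt₂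
    have hle : c * K₂ + c' ≤ KK := by rw [hKKdef]; linarith only [hmK₁0, hK₂2]
    have e2 : (c*K₂ + c') * κ t₂ ≤ KK * κ t₂ := mul_le_mul_of_nonneg_right hle hκt₂0
    linarith only [hy, e0, e1, e2]
  refine ⟨?_, ?_, ?_⟩
  · -- part 1
    intro ps hpsZ hps_eq
    have h1 := hW s hs
    have htri : dist o (α s) ≤ dist o ps + dist ps (α s) := dist_triangle o ps (α s)
    have h2 : dist ps (α s) ≤ m₀ * κ (dist o (α s)) := by
      rw [dist_comm, ← hps_eq]; exact h1
    have h3 := hcmp (dist o (α s)) (dist o ps) dist_nonneg dist_nonneg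
      (by linarith only [htri, h2])
    have hκps : 0 ≤ κ (dist o ps) := by linarith only [hκ.1 (dist o ps)]
    have h4 : m₀ * K₁ ≤ KK := by rw [hKKdef]; linarith only [hK₂2, hcK₂0, hc'0]
    calc infDist (α s) Z ≤ m₀ * κ (dist o (α s)) := h1
      _ ≤ m₀ * (K₁ * κ (dist o ps)) := mul_le_mul_of_nonneg_left h3 hm₀0
      _ ≤ KK * κ (dist o ps) := by
          linarith only [mul_le_mul_of_nonneg_right h4 hκps]
  · -- part 2
    have h4 : K₂ ≤ KK := by rw [hKKdef]; linarith only [hmK₁0, hcK₂0, hc'0]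
    calc infDist (α s) Z ≤ D := hDball s hs
      _ = K₂ * κ t₂ := hDdef
      _ ≤ KK * κ t₂ := mul_le_mul_of_nonneg_right h4 hκt₂0
  · -- part 3
    have ht₂mem : h t₂ ∈ h '' Set.Icc t₁ t₂ := ⟨t₂, ⟨ht12, le_rfl⟩, rfl⟩
    have ht₁mem : h t₁ ∈ h '' Set.Icc t₁ t₂ := ⟨t₁, ⟨le_rfl, ht12⟩, rfl⟩
    obtain ⟨p, hpZ, hpeq⟩ := hZclosed.exists_infDist_eq_dist hZne (α s)
    obtain ⟨u, hu0, rfl⟩ := hpZ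
    have hu0' : (0:ℝ) ≤ u := hu0
    have hdxD : dist (α s) (h u) ≤ D := by rw [← hpeq]; exact hDball s hs
    rcases lt_or_ge t₂ u with hut₂ | hule
    · -- case u > t₂
      set w := (u + t₂)/2 with hwdef
      have hwt₂ : t₂ ≤ w := by rw [hwdef]; linarith only [hut₂]
      have hwu : w ≤ u := by rw [hwdef]; linarith only [hut₂]
      have hw0 : (0:ℝ) ≤ w := le_trans ht₂ hwt₂
      have hSne : (h '' Set.Ici w).Nonempty := ⟨h w, w, Set.self_mem_Ici, rfl⟩
      have hSclosed : IsClosed (h '' Set.Ici w) := ray_img_closed hq' hh hw0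
      have hfc : Continuous (fun r => infDist (α r) (h '' Set.Ici w)) :=
        (continuous_infDist_pt _).comp hα.1
      have hfs_le : infDist (α s) (h '' Set.Ici w) ≤ D :=
        le_trans (infDist_le_dist_of_mem ⟨u, hwu, rfl⟩) hdxD
      have hut₂0 : (0:ℝ) ≤ u - t₂ := by linarith only [hut₂]
      have hxt₂base : ∀ z : ℝ, u - t₂ ≤ z → dist (α s) (h t₂) ≤ D + (q' * z + Q') := by
        intro z hz
        have tr := dist_triangle (α s) (h u) (h t₂)
        have t2 := hrayup u t₂ hu0' ht₂
        rw [abs_of_nonneg hut₂0] at t2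
        have t3 : q' * (u - t₂) ≤ q' * z := mul_le_mul_of_nonneg_left hz hq'.le
        linarith only [tr, t2, t3, hdxD]
      rcases le_or_gt (w - t₂) (q' * (2*D + Q')) with hsmall | hbig
      · -- small overshoot
        have hz : u - t₂ ≤ 2*(q'*(2*D + Q')) := by
          rw [hwdef] at hsmall; linarith only [hsmall]
        have hcore : dist (α s) (h t₂) ≤ c * D + c' := by
          have hxt := hxt₂base _ hz
          rw [hcdef, hc'def]
          have hP1D : (0:ℝ) ≤ 2*q'^2*q^2*(2+3*q'^2) * D := mul_nonneg hP1 hD0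
          linarith only [hxt, hP1D, hP2]
        exact hconv _ (le_trans (infDist_le_dist_of_mem ht₂mem) hcore)
      · -- big overshoot: crossing argument
        have h2Dge : ∀ tt : ℝ, 0 ≤ tt → tt ≤ t₂ → 2*D ≤ infDist (h tt) (h '' Set.Ici w) := by
          intro tt htt0 httle
          apply le_infDist' hSne
          rintro y ⟨v, hvw, rfl⟩
          have hvw' : w ≤ v := hvw
          have hv0 : (0:ℝ) ≤ v := le_trans hw0 hvw'
          have t1 := hraylow tt v htt0 hv0
          have habs : |tt - v| = v - tt := by
            rw [abs_sub_comm]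
            exact abs_of_nonneg (by linarith only [httle, hwt₂, hvw'])
          rw [habs] at t1
          have t4 : q' * (2*D) < q' * (dist (h tt) (h v)) := by
            linarith only [t1, hbig, hvw', httle]
          exact le_of_lt (lt_of_mul_lt_mul_left t4 hq'.le)
        have hfA2D : 2*D ≤ infDist (α A) (h '' Set.Ici w) := by
          rw [hαA]; exact h2Dge t₂ ht₂ le_rfl
        have hf02D : 2*D ≤ infDist (α 0) (h '' Set.Ici w) := by
          rw [hα0]; exact h2Dge t₁ ht₁ ht12
        have hextract : ∀ r, r ∈ Set.Icc (0:ℝ) A →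
            infDist (α r) (h '' Set.Ici w) = 2*D →
            ∃ vv : ℝ, 0 ≤ vv ∧ w - q'*(3*D + Q') ≤ vv ∧ vv ≤ w ∧ dist (α r) (h vv) ≤ D := by
          intro r hr hfr
          obtain ⟨p₁, hp₁Z, hp₁eq⟩ := hZclosed.exists_infDist_eq_dist hZne (α r)
          obtain ⟨vv, hvv0, rfl⟩ := hp₁Z
          have hvv0' : (0:ℝ) ≤ vv := hvv0
          have hd : dist (α r) (h vv) ≤ D := by rw [← hp₁eq]; exact hDball r hr
          have hvltw : vv ≤ w := by
            by_contra hcon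
            push_neg at hcon
            have hmm := infDist_le_dist_of_mem (s := h '' Set.Ici w) (x := α r) ⟨vv, le_of_lt hcon, rfl⟩
            rw [hfr] at hmm
            linarith only [hmm, hd, hD2]
          obtain ⟨p₂, hp₂S, hp₂eq⟩ := hSclosed.exists_infDist_eq_dist hSne (α r)
          obtain ⟨v₂, hv₂w, rfl⟩ := hp₂S
          have hv₂w' : w ≤ v₂ := hv₂w
          have hd₂ : dist (α r) (h v₂) = 2*D := by rw [← hp₂eq]; exact hfr
          have hdd : dist (h vv) (h v₂) ≤ 3*D := by
            have tt := dist_triangle (h vv) (α r) (h v₂)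
            rw [dist_comm (h vv) (α r)] at tt
            linarith only [tt, hd, hd₂]
          have hlow := hraylow vv v₂ hvv0' (le_trans hw0 hv₂w')
          have habs : v₂ - vv ≤ |vv - v₂| := by rw [abs_sub_comm]; exact le_abs_self _
          have hm2 := mul_le_mul_of_nonneg_left hdd hq'.le
          exact ⟨vv, hvv0', by linarith only [hlow, habs, hm2, hv₂w'], hvltw, hd⟩
        obtain ⟨s₂, hs₂mem, hfs₂pre⟩ := intermediate_value_Icc hs.2 hfc.continuousOn
          (Set.mem_Icc.2 ⟨le_trans hfs_le (by linarith only [hD0]), hfA2D⟩)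
        obtain ⟨s₁, hs₁mem, hfs₁pre⟩ := intermediate_value_Icc' hs.1 hfc.continuousOn
          (Set.mem_Icc.2 ⟨le_trans hfs_le (by linarith only [hD0]), hf02D⟩)
        have hfs₂ : infDist (α s₂) (h '' Set.Ici w) = 2*D := hfs₂pre
        have hfs₁ : infDist (α s₁) (h '' Set.Ici w) = 2*D := hfs₁pre
        have hs₂A : s₂ ∈ Set.Icc (0:ℝ) A := ⟨le_trans hs.1 hs₂mem.1, hs₂mem.2⟩
        have hs₁A : s₁ ∈ Set.Icc (0:ℝ) A := ⟨hs₁mem.1, le_trans hs₁mem.2 hs.2⟩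
        obtain ⟨v, hv0, hvlb, hvub, hvD⟩ := hextract s₂ hs₂A hfs₂
        obtain ⟨v', hv'0, hv'lb, hv'ub, hv'D⟩ := hextract s₁ hs₁A hfs₁
        have hvv' : dist (h v') (h v) ≤ q'*(q'*(3*D+Q')) + Q' := by
          have t1 := hrayup v' v hv'0 hv0
          have t2 : |v' - v| ≤ q'*(3*D+Q') :=
            abs_sub_le_iff.2 ⟨by linarith only [hv'ub, hvlb], by linarith only [hvub, hv'lb]⟩
          have t3 := mul_le_mul_of_nonneg_left t2 hq'.le
          linarith only [t1, t3]
        have hs₁s₂d : dist (α s₁) (α s₂) ≤ 2*D + (q'*(q'*(3*D+Q')) + Q') := by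
          have t1 := dist_triangle (α s₁) (h v') (α s₂)
          have t2 := dist_triangle (h v') (h v) (α s₂)
          rw [dist_comm (h v) (α s₂)] at t2
          linarith only [t1, t2, hv'D, hvD, hvv']
        have hs₁s₂ : s₂ - s₁ ≤ q * (2*D + (q'*(q'*(3*D+Q')) + Q') + Q) := by
          have t1 := hαlow s₁ s₂ hs₁A hs₂A
          have t2 : s₂ - s₁ ≤ |s₁ - s₂| := by rw [abs_sub_comm]; exact le_abs_self _
          have t3 := mul_le_mul_of_nonneg_left hs₁s₂d hq.le
          linarith only [t1, t2, t3]
        have hss₁ : dist (α s) (α s₁) ≤ q*(q * (2*D + (q'*(q'*(3*D+Q')) + Q') + Q)) + Q := by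
          have t1 := hαup s s₁ hs hs₁A
          have t2 : |s - s₁| = s - s₁ := abs_of_nonneg (by linarith only [hs₁mem.2])
          rw [t2] at t1
          have t4 := mul_le_mul_of_nonneg_left hs₁s₂ hq.le
          have t5 : q * (s - s₁) ≤ q * (s₂ - s₁) :=
            mul_le_mul_of_nonneg_left (by linarith only [hs₂mem.1]) hq.le
          linarith only [t1, t4, t5]
        have huv' : dist (h u) (h v') ≤
            2*D + (q*(q * (2*D + (q'*(q'*(3*D+Q')) + Q') + Q)) + Q) := by
          have t1 := dist_triangle (h u) (α s) (h v')
          have t2 := dist_triangle (α s) (α s₁) (h v')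
          rw [dist_comm (h u) (α s)] at t1
          linarith only [t1, t2, hdxD, hss₁, hv'D]
        have hub : u - t₂ ≤
            2*(q'*(2*D + (q*(q * (2*D + (q'*(q'*(3*D+Q')) + Q') + Q)) + Q) + Q')) := by
          have t1 := hraylow u v' hu0' hv'0
          have t2 : u - v' ≤ |u - v'| := le_abs_self _
          have t3 := mul_le_mul_of_nonneg_left huv' hq'.le
          have t5 : u - t₂ = 2*(u - w) := by rw [hwdef]; ring
          linarith only [t1, t2, t3, t5, hv'ub]
        have hcore : dist (α s) (h t₂) ≤ c * D + c' := by
          have hxt := hxt₂base _ hub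
          rw [hcdef, hc'def]
          linarith only [hxt]
        exact hconv _ (le_trans (infDist_le_dist_of_mem ht₂mem) hcore)
    · rcases lt_or_ge u t₁ with hut₁ | huge
      · -- case u < t₁
        set w := (u + t₁)/2 with hwdef
        have hwu : u ≤ w := by rw [hwdef]; linarith only [hut₁]
        have hwt₁ : w ≤ t₁ := by rw [hwdef]; linarith only [hut₁]
        have hw0 : (0:ℝ) ≤ w := le_trans hu0' hwu
        have hS'comp : IsCompact (h '' Set.Icc 0 w) := isCompact_Icc.image hh.1
        have hS'ne : (h '' Set.Icc 0 w).Nonempty := ⟨h 0, 0, ⟨le_rfl, hw0⟩, rfl⟩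
        have hfc : Continuous (fun r => infDist (α r) (h '' Set.Icc 0 w)) :=
          (continuous_infDist_pt _).comp hα.1
        have hfs_le : infDist (α s) (h '' Set.Icc 0 w) ≤ D :=
          le_trans (infDist_le_dist_of_mem ⟨u, ⟨hu0', hwu⟩, rfl⟩) hdxD
        have ht₁u0 : (0:ℝ) ≤ t₁ - u := by linarith only [hut₁]
        have hxt₁base : ∀ z : ℝ, t₁ - u ≤ z → dist (α s) (h t₁) ≤ D + (q' * z + Q') := by
          intro z hz
          have tr := dist_triangle (α s) (h u) (h t₁)
          have t2 := hrayup u t₁ hu0' ht₁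
          rw [abs_sub_comm, abs_of_nonneg ht₁u0] at t2
          have t3 : q' * (t₁ - u) ≤ q' * z := mul_le_mul_of_nonneg_left hz hq'.le
          linarith only [tr, t2, t3, hdxD]
        rcases le_or_gt (t₁ - w) (q' * (2*D + Q')) with hsmall | hbig
        · have hz : t₁ - u ≤ 2*(q'*(2*D + Q')) := by
            rw [hwdef] at hsmall; linarith only [hsmall]
          have hcore : dist (α s) (h t₁) ≤ c * D + c' := by
            have hxt := hxt₁base _ hz
            rw [hcdef, hc'def]
            have hP1D : (0:ℝ) ≤ 2*q'^2*q^2*(2+3*q'^2) * D := mul_nonneg hP1 hD0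
            linarith only [hxt, hP1D, hP2]
          exact hconv _ (le_trans (infDist_le_dist_of_mem ht₁mem) hcore)
        · have h2Dge : ∀ tt : ℝ, t₁ ≤ tt → 2*D ≤ infDist (h tt) (h '' Set.Icc 0 w) := by
            intro tt htt1
            have htt0 : (0:ℝ) ≤ tt := le_trans ht₁ htt1
            apply le_infDist' hS'ne
            rintro y ⟨v, ⟨hv0, hvw⟩, rfl⟩
            have t1 := hraylow tt v htt0 hv0
            have habs : |tt - v| = tt - v :=
              abs_of_nonneg (by linarith only [htt1, hwt₁, hvw])
            rw [habs] at t1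
            have t4 : q' * (2*D) < q' * (dist (h tt) (h v)) := by
              linarith only [t1, hbig, hvw, htt1]
            exact le_of_lt (lt_of_mul_lt_mul_left t4 hq'.le)
          have hfA2D : 2*D ≤ infDist (α A) (h '' Set.Icc 0 w) := by
            rw [hαA]; exact h2Dge t₂ ht12
          have hf02D : 2*D ≤ infDist (α 0) (h '' Set.Icc 0 w) := by
            rw [hα0]; exact h2Dge t₁ le_rfl
          have hextract : ∀ r, r ∈ Set.Icc (0:ℝ) A →
              infDist (α r) (h '' Set.Icc 0 w) = 2*D →
              ∃ vv : ℝ, 0 ≤ vv ∧ w ≤ vv ∧ vv ≤ w + q'*(3*D + Q') ∧ dist (α r) (h vv) ≤ D := by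
            intro r hr hfr
            obtain ⟨p₁, hp₁Z, hp₁eq⟩ := hZclosed.exists_infDist_eq_dist hZne (α r)
            obtain ⟨vv, hvv0, rfl⟩ := hp₁Z
            have hvv0' : (0:ℝ) ≤ vv := hvv0
            have hd : dist (α r) (h vv) ≤ D := by rw [← hp₁eq]; exact hDball r hr
            have hwlt : w ≤ vv := by
              by_contra hcon
              push_neg at hcon
              have hmm := infDist_le_dist_of_mem (s := h '' Set.Icc 0 w) (x := α r) ⟨vv, ⟨hvv0', le_of_lt hcon⟩, rfl⟩
              rw [hfr] at hmm
              linarith only [hmm, hd, hD2]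
            obtain ⟨p₂, hp₂S, hp₂eq⟩ := hS'comp.exists_infDist_eq_dist hS'ne (α r)
            obtain ⟨v₂, ⟨hv₂0, hv₂w⟩, rfl⟩ := hp₂S
            have hd₂ : dist (α r) (h v₂) = 2*D := by rw [← hp₂eq]; exact hfr
            have hdd : dist (h vv) (h v₂) ≤ 3*D := by
              have tt := dist_triangle (h vv) (α r) (h v₂)
              rw [dist_comm (h vv) (α r)] at tt
              linarith only [tt, hd, hd₂]
            have hlow := hraylow vv v₂ hvv0' hv₂0
            have habs : vv - v₂ ≤ |vv - v₂| := le_abs_self _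
            have hm2 := mul_le_mul_of_nonneg_left hdd hq'.le
            exact ⟨vv, hvv0', hwlt, by linarith only [hlow, habs, hm2, hv₂w], hd⟩
          obtain ⟨s₂, hs₂mem, hfs₂pre⟩ := intermediate_value_Icc hs.2 hfc.continuousOn
            (Set.mem_Icc.2 ⟨le_trans hfs_le (by linarith only [hD0]), hfA2D⟩)
          obtain ⟨s₁, hs₁mem, hfs₁pre⟩ := intermediate_value_Icc' hs.1 hfc.continuousOn
            (Set.mem_Icc.2 ⟨le_trans hfs_le (by linarith only [hD0]), hf02D⟩)
          have hfs₂ : infDist (α s₂) (h '' Set.Icc 0 w) = 2*D := hfs₂pre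
          have hfs₁ : infDist (α s₁) (h '' Set.Icc 0 w) = 2*D := hfs₁pre
          have hs₂A : s₂ ∈ Set.Icc (0:ℝ) A := ⟨le_trans hs.1 hs₂mem.1, hs₂mem.2⟩
          have hs₁A : s₁ ∈ Set.Icc (0:ℝ) A := ⟨hs₁mem.1, le_trans hs₁mem.2 hs.2⟩
          obtain ⟨v, hv0, hvlb, hvub, hvD⟩ := hextract s₂ hs₂A hfs₂
          obtain ⟨v', hv'0, hv'lb, hv'ub, hv'D⟩ := hextract s₁ hs₁A hfs₁
          have hvv' : dist (h v') (h v) ≤ q'*(q'*(3*D+Q')) + Q' := by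
            have t1 := hrayup v' v hv'0 hv0
            have t2 : |v' - v| ≤ q'*(3*D+Q') :=
              abs_sub_le_iff.2 ⟨by linarith only [hv'ub, hvlb], by linarith only [hvub, hv'lb]⟩
            have t3 := mul_le_mul_of_nonneg_left t2 hq'.le
            linarith only [t1, t3]
          have hs₁s₂d : dist (α s₁) (α s₂) ≤ 2*D + (q'*(q'*(3*D+Q')) + Q') := by
            have t1 := dist_triangle (α s₁) (h v') (α s₂)
            have t2 := dist_triangle (h v') (h v) (α s₂)
            rw [dist_comm (h v) (α s₂)] at t2
            linarith only [t1, t2, hv'D, hvD, hvv']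
          have hs₁s₂ : s₂ - s₁ ≤ q * (2*D + (q'*(q'*(3*D+Q')) + Q') + Q) := by
            have t1 := hαlow s₁ s₂ hs₁A hs₂A
            have t2 : s₂ - s₁ ≤ |s₁ - s₂| := by rw [abs_sub_comm]; exact le_abs_self _
            have t3 := mul_le_mul_of_nonneg_left hs₁s₂d hq.le
            linarith only [t1, t2, t3]
          have hss₁ : dist (α s) (α s₁) ≤ q*(q * (2*D + (q'*(q'*(3*D+Q')) + Q') + Q)) + Q := by
            have t1 := hαup s s₁ hs hs₁A
            have t2 : |s - s₁| = s - s₁ := abs_of_nonneg (by linarith only [hs₁mem.2])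
            rw [t2] at t1
            have t4 := mul_le_mul_of_nonneg_left hs₁s₂ hq.le
            have t5 : q * (s - s₁) ≤ q * (s₂ - s₁) :=
              mul_le_mul_of_nonneg_left (by linarith only [hs₂mem.1]) hq.le
            linarith only [t1, t4, t5]
          have huv' : dist (h u) (h v') ≤
              2*D + (q*(q * (2*D + (q'*(q'*(3*D+Q')) + Q') + Q)) + Q) := by
            have t1 := dist_triangle (h u) (α s) (h v')
            have t2 := dist_triangle (α s) (α s₁) (h v')
            rw [dist_comm (h u) (α s)] at t1
            linarith only [t1, t2, hdxD, hss₁, hv'D]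
          have hub : t₁ - u ≤
              2*(q'*(2*D + (q*(q * (2*D + (q'*(q'*(3*D+Q')) + Q') + Q)) + Q) + Q')) := by
            have t1 := hraylow u v' hu0' hv'0
            have t2 : v' - u ≤ |u - v'| := by rw [abs_sub_comm]; exact le_abs_self _
            have t3 := mul_le_mul_of_nonneg_left huv' hq'.le
            have t5 : t₁ - u = 2*(w - u) := by rw [hwdef]; ring
            linarith only [t1, t2, t3, t5, hv'lb]
          have hcore : dist (α s) (h t₁) ≤ c * D + c' := by
            have hxt := hxt₁base _ hub
            rw [hcdef, hc'def]
            linarith only [hxt]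
          exact hconv _ (le_trans (infDist_le_dist_of_mem ht₁mem) hcore)
      · -- middle case
        have hib : infDist (α s) (h '' Set.Icc t₁ t₂) ≤ D :=
          le_trans (infDist_le_dist_of_mem ⟨u, ⟨huge, hule⟩, rfl⟩) hdxD
        have hDc : D ≤ c * D + c' := by
          have := le_mul_of_one_le_left hD0 hc1
          linarith only [this, hc'0]
        exact hconv _ (le_trans hib hDc)
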